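/- arXiv:1805.03814 — 2 statements merged into one kernel-verified Lean document; each statement's English description precedes it below -/
import Mathlib

section
/- Let $K$ be a field carrying a valuation $v$ with value group $\Gamma = v(K^\times)$, and let $q$ be a prime number different from the characteristic of $K$. If the quotient $\Gamma/q\Gamma$ is infinite, then $K$ is not bounded; that is, there exists a positive integer $n$ such that there are infinitely many intermediate fields $E$ of a fixed algebraic closure of $K$ with $E/K$ Galois of degree $n$. -/
open Polynomial IntermediateField

/-- Let `K` be a field carrying a valuation `v` with value group
`Γ = v(Kˣ)` (presented as the unit group `Γ₀ˣ` of a linearly ordered commutative group with zero,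
onto which `v` is assumed to map `Kˣ`), and let `q` be a prime different from the characteristic
of `K`. If `Γ ⧸ qΓ` (multiplicatively: `Γ₀ˣ` modulo `q`-th powers) is infinite, then `K` is not
bounded: there is a positive integer `n` such that there are infinitely many intermediate fields
`E` of a fixed algebraic closure of `K` with `E/K` Galois of degree `n`. -/
theorem not_bounded_of_infinite_valueGroup_quotient
    {K : Type*} [Field K] {Γ₀ : Type*} [LinearOrderedCommGroupWithZero Γ₀]
    (v : Valuation K Γ₀) (hsurj : ∀ γ : Γ₀ˣ, ∃ x : Kˣ, v (x : K) = (γ : Γ₀))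
    (q : ℕ) (hq : q.Prime) (hchar : ringChar K ≠ q)
    (h : Infinite (Γ₀ˣ ⧸ (powMonoidHom q : Γ₀ˣ →* Γ₀ˣ).range)) :
    ∃ n : ℕ, 0 < n ∧
      {E : IntermediateField K (AlgebraicClosure K) |
        IsGalois K ↥E ∧ Module.finrank K ↥E = n}.Infinite := by
  classical
  set A := AlgebraicClosure K with hA
  set Q := Γ₀ˣ ⧸ (powMonoidHom q : Γ₀ˣ →* Γ₀ˣ).range with hQdef
  haveI : Infinite Q := h
  -- the characteristic does not divide q
  have hq0 : (q : K) ≠ 0 := by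
    intro h0
    have hdvd : ringChar K ∣ q := ringChar.dvd h0
    rcases (Nat.dvd_prime hq).mp hdvd with h1 | h1
    · exact CharP.ringChar_ne_one h1
    · exact hchar h1
  -- choose representatives
  have hout : ∀ c : Q, ∃ x : Kˣ, v (x : K) = ((Quotient.out c : Γ₀ˣ) : Γ₀) :=
    fun c => hsurj _
  choose x hx using hout
  set a : Q → K := fun c => (x c : K) with ha
  have ha0 : ∀ c, a c ≠ 0 := fun c => (x c).ne_zero
  set p : Q → K[X] := fun c => X ^ q - C (a c) with hp
  have hpne : ∀ c, p c ≠ 0 := fun c => (monic_X_pow_sub_C _ hq.ne_zero).ne_zero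
  have hpdeg : ∀ c, (p c).natDegree = q := fun c => natDegree_X_pow_sub_C
  have hpsep : ∀ c, (p c).Separable := fun c => separable_X_pow_sub_C _ hq0 (ha0 c)
  set E : Q → IntermediateField K A := fun c => adjoin K ((p c).rootSet A) with hE
  have hsplits : ∀ c, ((p c).map (algebraMap K A)).Splits := fun c => IsAlgClosed.splits _
  have hsf : ∀ c, (p c).IsSplittingField K (E c) := fun c =>
    adjoin_rootSet_isSplittingField (hsplits c)
  have hfd : ∀ c, FiniteDimensional K (E c) := fun c => by
    haveI := hsf c
    exact Polynomial.IsSplittingField.finiteDimensional (E c) (p c)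
  have hgal : ∀ c, IsGalois K (E c) := fun c => by
    haveI := hsf c
    exact IsGalois.of_separable_splitting_field (hpsep c)
  -- the degree bound
  have hrank : ∀ c, Module.finrank K (E c) ≤ q.factorial := by
    intro c
    haveI := hsf c
    haveI := hfd c
    haveI := hgal c
    haveI : Fact (((p c).map (algebraMap K A)).Splits) := ⟨hsplits c⟩
    rw [← IsGalois.card_aut_eq_finrank]
    have e : (↥(E c) ≃ₐ[K] ↥(E c)) ≃ (p c).Gal :=
      (AlgEquiv.autCongr (Polynomial.IsSplittingField.algEquiv (E c) (p c))).toEquiv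
    rw [Nat.card_congr e, Nat.card_eq_fintype_card]
    calc Fintype.card (p c).Gal ≤ Fintype.card (Equiv.Perm ((p c).rootSet A)) :=
          Fintype.card_le_of_injective _ (Polynomial.Gal.galActionHom_injective (p c) A)
      _ = (Fintype.card ((p c).rootSet A)).factorial := Fintype.card_perm
      _ = q.factorial := by
          rw [card_rootSet_eq_natDegree (hpsep c) (hsplits c), hpdeg c]
  -- roots
  have hroot : ∀ c, ∃ α : A, α ∈ E c ∧ α ^ q = algebraMap K A (a c) := by
    intro c
    obtain ⟨α, hα⟩ := IsAlgClosed.exists_pow_nat_eq (algebraMap K A (a c)) hq.pos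
    refine ⟨α, ?_, hα⟩
    apply subset_adjoin
    rw [mem_rootSet]
    refine ⟨hpne c, ?_⟩
    simp [hp, hα]
  choose α hαE hαq using hroot
  have hα0 : ∀ c, α c ≠ 0 := by
    intro c hc
    apply ha0 c
    have := hαq c
    rw [hc, zero_pow hq.ne_zero] at this
    exact (_root_.map_eq_zero (algebraMap K A)).mp this.symm
  -- fibers of E are finite
  have hfiber : ∀ F : IntermediateField K A, {c : Q | E c = F}.Finite := by
    intro F
    by_contra hinf
    replace hinf : {c : Q | E c = F}.Infinite := hinf
    obtain ⟨c₀, hc₀⟩ := hinf.nonempty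
    haveI := hfd c₀
    haveI := hgal c₀
    -- the q-th powers of roots in E c₀
    have hpow : ∀ c (hm : α c ∈ E c₀),
        (⟨α c, hm⟩ : ↥(E c₀)) ^ q = algebraMap K ↥(E c₀) (a c) := by
      intro c hm
      ext
      rw [SubmonoidClass.coe_pow]
      rw [show ((⟨α c, hm⟩ : ↥(E c₀)) : A) = α c from rfl, hαq c]
      rfl
    -- elements of E c₀ whose q-th power is 1
    have hrfin : {y : ↥(E c₀) | y ^ q = 1}.Finite := by
      have hne : (X ^ q - C 1 : Polynomial ↥(E c₀)) ≠ 0 :=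
        (monic_X_pow_sub_C (1 : ↥(E c₀)) hq.ne_zero).ne_zero
      apply Set.Finite.subset (Polynomial.finite_setOf_isRoot hne)
      intro y hy
      simp only [Set.mem_setOf_eq] at hy ⊢
      simp [Polynomial.IsRoot, hy]
    haveI : Finite (↥(E c₀) ≃ₐ[K] ↥(E c₀)) := Finite.of_fintype _
    set G := (↥(E c₀) ≃ₐ[K] ↥(E c₀)) with hG
    set f : Q → (G → ↥(E c₀)) := fun c => fun σ =>
      if hc : α c ∈ E c₀ then σ ⟨α c, hc⟩ * (⟨α c, hc⟩ : ↥(E c₀))⁻¹ else 1 with hf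
    have hmaps : Set.MapsTo f {c : Q | E c = F}
        (Set.pi Set.univ fun _ : G => {y : ↥(E c₀) | y ^ q = 1}) := by
      intro c hc σ _
      have hmem : α c ∈ E c₀ := by
        have := hαE c
        rwa [show E c = F from hc, ← show E c₀ = F from hc₀] at this
      simp only [hf, dif_pos hmem, Set.mem_setOf_eq]
      rw [mul_pow, ← map_pow, hpow c hmem, AlgEquiv.commutes, inv_pow, hpow c hmem,
        mul_inv_cancel₀]
      rw [Ne, _root_.map_eq_zero]
      exact ha0 c
    have hpifin : (Set.pi Set.univ fun _ : G => {y : ↥(E c₀) | y ^ q = 1}).Finite :=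
      Set.Finite.pi fun _ => hrfin
    obtain ⟨c, hc, c', hc', hne, heq⟩ := hinf.exists_ne_map_eq_of_mapsTo hmaps hpifin
    apply hne
    -- from f c = f c' deduce c = c'
    have hmc : α c ∈ E c₀ := by
      have := hαE c; rwa [show E c = F from hc, ← show E c₀ = F from hc₀] at this
    have hmc' : α c' ∈ E c₀ := by
      have := hαE c'; rwa [show E c' = F from hc', ← show E c₀ = F from hc₀] at this
    set β : ↥(E c₀) := ⟨α c, hmc⟩ with hβ
    set β' : ↥(E c₀) := ⟨α c', hmc'⟩ with hβ'
    have hβ0 : β ≠ 0 := fun hz => hα0 c (by simpa [hβ] using congrArg Subtype.val hz)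
    have hβ'0 : β' ≠ 0 := fun hz => hα0 c' (by simpa [hβ'] using congrArg Subtype.val hz)
    have hfix : ∀ σ : G, σ (β * β'⁻¹) = β * β'⁻¹ := by
      intro σ
      have h1 : σ β * β⁻¹ = σ β' * β'⁻¹ := by
        have := congrFun heq σ
        simpa only [hf, dif_pos hmc, dif_pos hmc'] using this
      have h1' : σ β / β = σ β' / β' := by
        simpa [div_eq_mul_inv] using h1
      have key : σ β * β' = σ β' * β := (div_eq_div_iff hβ0 hβ'0).mp h1'
      have hσβ' : σ β' ≠ 0 := fun hz => hβ'0 (σ.injective (by simp [hz]))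
      rw [map_mul, map_inv₀, ← div_eq_mul_inv, ← div_eq_mul_inv,
        div_eq_div_iff hσβ' hβ'0]
      linear_combination key
    have hfixmem : β * β'⁻¹ ∈ IntermediateField.fixedField (⊤ : Subgroup G) :=
      fun σ => hfix σ.1
    have hbot : IntermediateField.fixedField (⊤ : Subgroup G) = ⊥ :=
      ((IsGalois.tfae (F := K) (E := ↥(E c₀))).out 0 1).mp (hgal c₀)
    rw [hbot] at hfixmem
    obtain ⟨k, hk⟩ := IntermediateField.mem_bot.mp hfixmem
    have hkq : k ^ q * a c' = a c := by
      apply (algebraMap K ↥(E c₀)).injective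
      rw [map_mul, map_pow, hk, mul_pow, inv_pow, hpow c hmc, hpow c' hmc',
        inv_mul_cancel_right₀]
      rw [Ne, _root_.map_eq_zero]
      exact ha0 c'
    have hk0 : k ≠ 0 := by
      rintro rfl
      apply ha0 c
      rw [← hkq, zero_pow hq.ne_zero, zero_mul]
    have hvk : v k ≠ 0 := v.ne_zero_iff.mpr hk0
    set u : Γ₀ˣ := Units.mk0 (v k) hvk with hu
    have hunit : (Quotient.out c : Γ₀ˣ) = u ^ q * Quotient.out c' := by
      apply Units.ext
      rw [Units.val_mul, Units.val_pow_eq_pow_val, ← hx c, ← hx c']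
      show v (a c) = (v k) ^ q * v (a c')
      rw [← hkq, map_mul, map_pow]
    calc c = QuotientGroup.mk (Quotient.out c) := (QuotientGroup.out_eq' c).symm
      _ = QuotientGroup.mk (Quotient.out c') := by
          rw [hunit]
          apply QuotientGroup.eq.mpr
          refine ⟨u⁻¹, ?_⟩
          simp only [powMonoidHom_apply, mul_inv_rev, inv_pow]
          rw [mul_comm ((Quotient.out c')⁻¹) ((u ^ q)⁻¹), mul_assoc, inv_mul_cancel,
            mul_one]
      _ = c' := QuotientGroup.out_eq' c'
  -- the range of E is infinite
  have hrange : (Set.range E).Infinite := by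
    intro hfin
    have huniv : (Set.univ : Set Q).Finite := by
      apply Set.Finite.subset (hfin.biUnion fun F _ => hfiber F)
      intro c _
      exact Set.mem_biUnion (Set.mem_range_self c) rfl
    exact Set.infinite_univ huniv
  -- pigeonhole on the degree
  by_contra hcon
  push_neg at hcon
  apply hrange
  apply Set.Finite.subset (Set.Finite.biUnion (Finset.Icc 1 q.factorial).finite_toSet
    (fun n hn => hcon n (Finset.mem_Icc.mp hn).1))
  rintro F ⟨c, rfl⟩
  have h1 : 0 < Module.finrank K (E c) := by
    haveI := hfd c
    exact Module.finrank_pos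
  exact Set.mem_biUnion (Finset.mem_Icc.mpr ⟨h1, hrank c⟩) ⟨hgal c, rfl⟩
end

section
/- Call a profinite group small if for every positive integer $n$ it has only finitely many open subgroups of index $n$. Let $G$ be a profinite group and let $N$ be a closed normal subgroup of $G$. If $N$ (with the subspace topology) and the quotient $G/N$ (with the quotient topology) are both small, then $G$ is small. -/
/-- A topological group is *small* if for every positive integer `n` it has only finitely many
open subgroups of index `n`. -/
def SmallTopGroup (G : Type*) [Group G] [TopologicalSpace G] : Prop :=
  ∀ n : ℕ, 0 < n → {H : Subgroup G | IsOpen (H : Set G) ∧ H.index = n}.Finite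

open Subgroup

section Helpers

variable {A : Type*} [Group A] [TopologicalSpace A]

lemma smallAux (hA : SmallTopGroup A) (m : ℕ) :
    {H : Subgroup A | IsOpen (H : Set A) ∧ 0 < H.index ∧ H.index ≤ m}.Finite := by
  refine Set.Finite.subset (Set.Finite.biUnion (Finset.Icc 1 m).finite_toSet
    (fun i hi => hA i (by simp only [Finset.coe_Icc, Set.mem_Icc] at hi; omega))) ?_
  rintro H ⟨h1, h2, h3⟩
  exact Set.mem_biUnion (by simp only [Finset.coe_Icc, Set.mem_Icc]; omega) ⟨h1, rfl⟩

lemma indexNeZero [ContinuousMul A] [CompactSpace A] {H : Subgroup A}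
    (h : IsOpen (H : Set A)) : H.index ≠ 0 :=
  have := H.quotient_finite_of_isOpen h
  Subgroup.index_ne_zero_of_finite

lemma smallTopGroup_open_subgroup [IsTopologicalGroup A] [CompactSpace A]
    (hA : SmallTopGroup A) (U : Subgroup A) (hU : IsOpen (U : Set A)) :
    SmallTopGroup ↥U := by
  intro n hn
  have hmap : IsOpenMap (Subtype.val : U → A) := hU.isOpenMap_subtype_val
  refine Set.Finite.of_finite_image (f := fun H => H.map U.subtype) ?_ ?_
  · refine Set.Finite.subset (hA (n * U.index) ?_) ?_
    · have := indexNeZero hU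
      exact Nat.pos_of_ne_zero (Nat.mul_ne_zero (by omega) this)
    · rintro _ ⟨H, ⟨hHo, hHi⟩, rfl⟩
      constructor
      · have : ((H.map U.subtype : Subgroup A) : Set A) = Subtype.val '' (H : Set ↥U) := by
          simp [Subgroup.coe_map]
        rw [this]; exact hmap _ hHo
      · have hle : H.map U.subtype ≤ U := map_subtype_le H
        have h1 : (H.map U.subtype).relIndex U * U.index = (H.map U.subtype).index :=
          relIndex_mul_index hle
        have h2 : (H.map U.subtype).relIndex U = H.index := by
          rw [relIndex, subgroupOf, comap_map_eq_self_of_injective U.subtype_injective]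
        rw [← h1, h2, hHi]
  · intro H _ H' _ h
    exact Subgroup.map_injective U.subtype_injective h

end Helpers

section HomCount

variable {A T : Type*} [Group A] [TopologicalSpace A] [IsTopologicalGroup A] [CompactSpace A]
  [Group T] [Finite T]

lemma finite_openKer_homs (hA : SmallTopGroup A) :
    {f : A →* T | IsOpen ((f.ker : Subgroup A) : Set A)}.Finite := by
  classical
  have hK := smallAux hA (Nat.card T)
  have cover : {f : A →* T | IsOpen ((f.ker : Subgroup A) : Set A)} ⊆
      ⋃ H ∈ {H : Subgroup A | IsOpen (H : Set A) ∧ 0 < H.index ∧ H.index ≤ Nat.card T},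
        {f : A →* T | f.ker = H} := by
    intro f hf
    have : Finite (A ⧸ f.ker) := Subgroup.quotient_finite_of_isOpen _ hf
    refine Set.mem_biUnion ⟨hf, Nat.pos_of_ne_zero Subgroup.index_ne_zero_of_finite, ?_⟩ rfl
    rw [Subgroup.index_ker]
    exact Nat.card_le_card_of_injective _ f.range.subtype_injective
  refine Set.Finite.subset (Set.Finite.biUnion hK fun H hH => ?_) cover
  have : Finite (A ⧸ H) := H.quotient_finite_of_isOpen hH.1
  refine Set.Finite.of_finite_image
    (f := fun (f : A →* T) => fun (q : A ⧸ H) => f q.out) (Set.toFinite _) ?_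
  intro f hf g hg h
  ext a
  have h1 : f (Quotient.out (QuotientGroup.mk a : A ⧸ H)) =
      g (Quotient.out (QuotientGroup.mk a : A ⧸ H)) := congrFun h _
  obtain ⟨x, hx⟩ := QuotientGroup.mk_out_eq_mul H a
  rw [hx, map_mul, map_mul] at h1
  have hfx : f x = 1 := by
    have : (x : A) ∈ f.ker := by rw [hf]; exact x.2
    exact this
  have hgx : g x = 1 := by
    have : (x : A) ∈ g.ker := by rw [hg]; exact x.2
    exact this
  rw [hfx, hgx, mul_one, mul_one] at h1
  exact h1

end HomCount

section Above

variable {A : Type*} [Group A]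

lemma finite_subgroups_above {K : Subgroup A} [K.Normal] (h : Finite (A ⧸ K)) :
    {H : Subgroup A | K ≤ H}.Finite := by
  refine Set.Finite.of_finite_image
    (f := fun H => H.map (QuotientGroup.mk' K)) (Set.toFinite _) ?_
  intro H hH H' hH' hmap
  have := congrArg (Subgroup.comap (QuotientGroup.mk' K)) hmap
  rwa [Subgroup.comap_map_eq, Subgroup.comap_map_eq, QuotientGroup.ker_mk',
    sup_of_le_left hH, sup_of_le_left hH'] at this

end Above

section Core

variable {A : Type*} [Group A] [TopologicalSpace A] [IsTopologicalGroup A]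

lemma isOpen_normalCore [CompactSpace A] {H : Subgroup A} (h : IsOpen (H : Set A)) :
    IsOpen ((H.normalCore : Subgroup A) : Set A) := by
  have : Finite (A ⧸ H) := H.quotient_finite_of_isOpen h
  have heq : ((H.normalCore : Subgroup A) : Set A) =
      ⋂ q : A ⧸ H, (fun a => (Quotient.out q)⁻¹ * a * Quotient.out q) ⁻¹' (H : Set A) := by
    ext a
    simp only [Set.mem_iInter, Set.mem_preimage, SetLike.mem_coe]
    constructor
    · intro ha q
      have ha' : ∀ b : A, b * a * b⁻¹ ∈ H := ha
      simpa using ha' (Quotient.out q)⁻¹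
    · intro ha
      show ∀ b : A, b * a * b⁻¹ ∈ H
      intro b
      have key : ∀ c : A, c⁻¹ * a * c ∈ H := by
        intro c
        obtain ⟨x, hx⟩ := QuotientGroup.mk_out_eq_mul H c
        have := ha (QuotientGroup.mk c)
        rw [hx] at this
        -- this : (c*x)⁻¹ * a * (c*x) ∈ H
        have h2 : (x : A) * (((c * x)⁻¹ * a * (c * x))) * (x : A)⁻¹ ∈ H := by
          have hx2 := this
          simpa [mul_assoc] using H.mul_mem (H.mul_mem x.2 hx2) (H.inv_mem x.2)
        simpa [mul_assoc, mul_inv_rev] using h2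
      have := key b⁻¹
      simpa using this
  rw [heq]
  exact isOpen_iInter_of_finite fun q =>
    ((continuous_const.mul continuous_id).mul continuous_const).isOpen_preimage _ h

omit [TopologicalSpace A] [IsTopologicalGroup A] in
lemma normalCore_index_le {H : Subgroup A} (hfin : Finite (A ⧸ H)) :
    H.normalCore.index ≤ (H.index).factorial := by
  classical
  have : Fintype (A ⧸ H) := Fintype.ofFinite _
  rw [Subgroup.normalCore_eq_ker, Subgroup.index_ker]
  calc Nat.card (MulAction.toPermHom A (A ⧸ H)).range
      ≤ Nat.card (Equiv.Perm (A ⧸ H)) :=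
        Nat.card_le_card_of_injective _ (Subgroup.subtype_injective _)
    _ = (H.index).factorial := by
        rw [Nat.card_eq_fintype_card, Fintype.card_perm, Subgroup.index,
          Nat.card_eq_fintype_card]

end Core

section Dmap

variable {G : Type*} [Group G] [TopologicalSpace G] [IsTopologicalGroup G]

lemma exists_dmap (N : Subgroup G) [N.Normal] (M : Subgroup ↥N) [M.Normal]
    (K : Subgroup (G ⧸ N)) (H₀ H : Subgroup G)
    (hH₀K : H₀.map (QuotientGroup.mk' N) = K) (hH₀M : H₀.subgroupOf N = M)
    (hHn : H.Normal) (hHo : IsOpen (H : Set G)) (hH₀o : IsOpen (H₀ : Set G))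
    (hHM : H.subgroupOf N = M) (hHK : H.map (QuotientGroup.mk' N) = K) :
    ∃ f : ↥K →* ↥N ⧸ M, IsOpen ((f.ker : Subgroup ↥K) : Set ↥K) ∧
      ∀ (k : ↥K) (h h' : G), h ∈ H₀ → h' ∈ H →
        (QuotientGroup.mk h : G ⧸ N) = ↑k → (QuotientGroup.mk h' : G ⧸ N) = ↑k →
        ∀ (hmem : h'⁻¹ * h ∈ N), f k = QuotientGroup.mk (⟨h'⁻¹ * h, hmem⟩ : ↥N) := by
  classical
  -- canonical lifts
  have memK0 : ∀ k : ↥K, ∃ h : G, h ∈ H₀ ∧ (QuotientGroup.mk h : G ⧸ N) = (k : G ⧸ N) := by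
    intro k
    have hk : (k : G ⧸ N) ∈ H₀.map (QuotientGroup.mk' N) := by rw [hH₀K]; exact k.2
    obtain ⟨h, hh, he⟩ := Subgroup.mem_map.mp hk
    exact ⟨h, hh, he⟩
  have memKH : ∀ k : ↥K, ∃ h : G, h ∈ H ∧ (QuotientGroup.mk h : G ⧸ N) = (k : G ⧸ N) := by
    intro k
    have hk : (k : G ⧸ N) ∈ H.map (QuotientGroup.mk' N) := by rw [hHK]; exact k.2
    obtain ⟨h, hh, he⟩ := Subgroup.mem_map.mp hk
    exact ⟨h, hh, he⟩
  set c : ↥K → G := fun k => (memK0 k).choose with hc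
  set c' : ↥K → G := fun k => (memKH k).choose with hc'
  have hcH₀ : ∀ k, c k ∈ H₀ := fun k => (memK0 k).choose_spec.1
  have hcmk : ∀ k, (QuotientGroup.mk (c k) : G ⧸ N) = (k : G ⧸ N) := fun k =>
    (memK0 k).choose_spec.2
  have hc'H : ∀ k, c' k ∈ H := fun k => (memKH k).choose_spec.1
  have hc'mk : ∀ k, (QuotientGroup.mk (c' k) : G ⧸ N) = (k : G ⧸ N) := fun k =>
    (memKH k).choose_spec.2
  have keymem : ∀ k : ↥K, (c' k)⁻¹ * c k ∈ N := fun k =>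
    QuotientGroup.eq.mp ((hc'mk k).trans (hcmk k).symm)
  -- membership transfer between H and H₀ inside N
  have transfer : ∀ g : G, g ∈ N → g ∈ H₀ → g ∈ H := by
    intro g hgN hg0
    have : (⟨g, hgN⟩ : ↥N) ∈ H₀.subgroupOf N := by
      rw [Subgroup.mem_subgroupOf]; exact hg0
    rw [hH₀M, ← hHM, Subgroup.mem_subgroupOf] at this
    exact this
  set g0 : ↥K → ↥N ⧸ M := fun k => QuotientGroup.mk (⟨(c' k)⁻¹ * c k, keymem k⟩ : ↥N)
    with hg0def
  -- the well-definedness property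
  have WD : ∀ (k : ↥K) (h h' : G), h ∈ H₀ → h' ∈ H →
      (QuotientGroup.mk h : G ⧸ N) = ↑k → (QuotientGroup.mk h' : G ⧸ N) = ↑k →
      ∀ (hmem : h'⁻¹ * h ∈ N), g0 k = QuotientGroup.mk (⟨h'⁻¹ * h, hmem⟩ : ↥N) := by
    intro k h h' hh hh' he he' hmem
    show QuotientGroup.mk (⟨(c' k)⁻¹ * c k, keymem k⟩ : ↥N) = _
    rw [QuotientGroup.eq]
    rw [← hHM, Subgroup.mem_subgroupOf]
    show ((c' k)⁻¹ * c k)⁻¹ * (h'⁻¹ * h) ∈ H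
    -- decompose
    have hdec : ((c' k)⁻¹ * c k)⁻¹ * (h'⁻¹ * h)
        = ((c k)⁻¹ * ((c' k) * h'⁻¹) * ((c k)⁻¹)⁻¹) * ((c k)⁻¹ * h) := by group
    rw [hdec]
    refine H.mul_mem (hHn.conj_mem _ (H.mul_mem (hc'H k) (H.inv_mem hh')) _) ?_
    -- (c k)⁻¹ * h ∈ N ∩ H₀ ⊆ H
    have hN' : (c k)⁻¹ * h ∈ N := QuotientGroup.eq.mp ((hcmk k).trans he.symm)
    exact transfer _ hN' (H₀.mul_mem (H₀.inv_mem (hcH₀ k)) hh)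
  -- multiplicativity
  have hmul : ∀ k₁ k₂ : ↥K, g0 (k₁ * k₂) = g0 k₁ * g0 k₂ := by
    intro k₁ k₂
    have hmem12 : (c' k₁ * c' k₂)⁻¹ * (c k₁ * c k₂) ∈ N := by
      refine QuotientGroup.eq.mp ?_
      rw [QuotientGroup.mk_mul, QuotientGroup.mk_mul, hcmk, hcmk, hc'mk, hc'mk]
    have h12 := WD (k₁ * k₂) (c k₁ * c k₂) (c' k₁ * c' k₂)
      (H₀.mul_mem (hcH₀ k₁) (hcH₀ k₂)) (H.mul_mem (hc'H k₁) (hc'H k₂))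
      (by rw [QuotientGroup.mk_mul, hcmk, hcmk]; rfl)
      (by rw [QuotientGroup.mk_mul, hc'mk, hc'mk]; rfl) hmem12
    rw [h12]
    show _ = QuotientGroup.mk ((⟨(c' k₁)⁻¹ * c k₁, keymem k₁⟩ : ↥N)
      * (⟨(c' k₂)⁻¹ * c k₂, keymem k₂⟩ : ↥N))
    rw [QuotientGroup.eq]
    rw [← hHM, Subgroup.mem_subgroupOf]
    show ((c' k₁ * c' k₂)⁻¹ * (c k₁ * c k₂))⁻¹ * (((c' k₁)⁻¹ * c k₁) * ((c' k₂)⁻¹ * c k₂)) ∈ H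
    have hdec : ((c' k₁ * c' k₂)⁻¹ * (c k₁ * c k₂))⁻¹ * (((c' k₁)⁻¹ * c k₁) * ((c' k₂)⁻¹ * c k₂))
        = ((c k₁ * c k₂)⁻¹ * (c' k₁ * c' k₂ * (c' k₁)⁻¹) * ((c k₁ * c k₂)⁻¹)⁻¹)
          * ((c k₂)⁻¹ * (c' k₂)⁻¹ * ((c k₂)⁻¹)⁻¹) := by group
    rw [hdec]
    exact H.mul_mem
      (hHn.conj_mem _ (H.mul_mem (H.mul_mem (hc'H k₁) (hc'H k₂)) (H.inv_mem (hc'H k₁))) _)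
      (hHn.conj_mem _ (H.inv_mem (hc'H k₂)) _)
  refine ⟨MonoidHom.mk' g0 hmul, ?_, ?_⟩
  · -- kernel open
    have hker : (((MonoidHom.mk' g0 hmul).ker : Subgroup ↥K) : Set ↥K)
        = Subtype.val ⁻¹' (((H₀ ⊓ H).map (QuotientGroup.mk' N) : Subgroup (G ⧸ N)) : Set (G ⧸ N)) := by
      ext k
      simp only [SetLike.mem_coe, MonoidHom.mem_ker, Set.mem_preimage]
      constructor
      · intro hk
        have hk' : (⟨(c' k)⁻¹ * c k, keymem k⟩ : ↥N) ∈ M := by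
          rw [← QuotientGroup.eq_one_iff]; exact hk
        have hcH : c k ∈ H := by
          have h1 : (c' k)⁻¹ * c k ∈ H := by
            rw [← hHM, Subgroup.mem_subgroupOf] at hk'
            exact hk'
          have := H.mul_mem (hc'H k) h1
          simpa using this
        exact ⟨c k, ⟨hcH₀ k, hcH⟩, hcmk k⟩
      · rintro ⟨b, hb, hbe⟩
        have hmemb : b⁻¹ * b ∈ N := by simpa using N.one_mem
        have hwd := WD k b b hb.1 hb.2 hbe hbe hmemb
        show g0 k = 1
        rw [hwd]
        have : (⟨b⁻¹ * b, hmemb⟩ : ↥N) = 1 := by ext; simp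
        rw [this, QuotientGroup.mk_one]
    rw [hker]
    refine Continuous.isOpen_preimage continuous_subtype_val _ ?_
    have : (((H₀ ⊓ H).map (QuotientGroup.mk' N) : Subgroup (G ⧸ N)) : Set (G ⧸ N))
        = QuotientGroup.mk '' ((H₀ : Set G) ∩ (H : Set G)) := by
      rw [Subgroup.coe_map]
      rfl
    rw [this]
    exact QuotientGroup.isOpenMap_coe _ (hH₀o.inter hHo)
  · exact WD

end Dmap


section Fiber

variable {G : Type*} [Group G] [TopologicalSpace G] [IsTopologicalGroup G] [CompactSpace G]

lemma fiber_finite (N : Subgroup G) [N.Normal] (hN : IsClosed (N : Set G))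
    (h₂ : SmallTopGroup (G ⧸ N)) (M : Subgroup ↥N) (K : Subgroup (G ⧸ N)) :
    {H : Subgroup G | H.Normal ∧ IsOpen (H : Set G) ∧ H.subgroupOf N = M ∧
      H.map (QuotientGroup.mk' N) = K}.Finite := by
  classical
  set S := {H : Subgroup G | H.Normal ∧ IsOpen (H : Set G) ∧ H.subgroupOf N = M ∧
      H.map (QuotientGroup.mk' N) = K} with hSdef
  rcases S.eq_empty_or_nonempty with he | ⟨H₀, hH₀⟩
  · rw [he]; exact Set.finite_empty
  obtain ⟨hH₀n, hH₀o, hH₀M, hH₀K⟩ := hH₀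
  haveI : CompactSpace ↥N := isCompact_iff_compactSpace.mp hN.isCompact
  haveI hMn : M.Normal := by
    rw [← hH₀M]
    haveI := hH₀n
    infer_instance
  have hMopen : IsOpen (M : Set ↥N) := by
    rw [← hH₀M]; exact Subgroup.subgroupOf_isOpen N H₀ hH₀o
  haveI : Finite (↥N ⧸ M) := Subgroup.quotient_finite_of_isOpen M hMopen
  have hKopen : IsOpen (K : Set (G ⧸ N)) := by
    rw [← hH₀K]
    have hcm : ((H₀.map (QuotientGroup.mk' N) : Subgroup (G ⧸ N)) : Set (G ⧸ N))
        = QuotientGroup.mk '' (H₀ : Set G) := by rw [Subgroup.coe_map]; rfl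
    rw [hcm]
    exact QuotientGroup.isOpenMap_coe _ hH₀o
  haveI : CompactSpace ↥K :=
    isCompact_iff_compactSpace.mp (K.isClosed_of_isOpen hKopen).isCompact
  have hKsmall : SmallTopGroup ↥K := smallTopGroup_open_subgroup h₂ K hKopen
  have hfin : {f : ↥K →* ↥N ⧸ M | IsOpen ((f.ker : Subgroup ↥K) : Set ↥K)}.Finite :=
    finite_openKer_homs hKsmall
  have hexists : ∀ H ∈ S, ∃ f : ↥K →* ↥N ⧸ M,
      IsOpen ((f.ker : Subgroup ↥K) : Set ↥K) ∧
      ∀ (k : ↥K) (h h' : G), h ∈ H₀ → h' ∈ H →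
        (QuotientGroup.mk h : G ⧸ N) = ↑k → (QuotientGroup.mk h' : G ⧸ N) = ↑k →
        ∀ (hmem : h'⁻¹ * h ∈ N), f k = QuotientGroup.mk (⟨h'⁻¹ * h, hmem⟩ : ↥N) :=
    fun H hH => exists_dmap N M K H₀ H hH₀K hH₀M hH.1 hH.2.1 hH₀o hH.2.2.1 hH.2.2.2
  choose! f hfopen hfspec using hexists
  have key : ∀ Ha ∈ S, ∀ Hb ∈ S, f Ha = f Hb → Ha ≤ Hb := by
    intro Ha hHa Hb hHb hfab a ha
    obtain ⟨hHan, hHao, hHaM, hHaK⟩ := hHa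
    obtain ⟨hHbn, hHbo, hHbM, hHbK⟩ := hHb
    have hka : (QuotientGroup.mk a : G ⧸ N) ∈ K := by
      rw [← hHaK]; exact ⟨a, ha, rfl⟩
    set k : ↥K := ⟨QuotientGroup.mk a, hka⟩ with hkdef
    have hk0 : (k : G ⧸ N) ∈ H₀.map (QuotientGroup.mk' N) := by rw [hH₀K]; exact hka
    obtain ⟨h, hh, hhe⟩ := Subgroup.mem_map.mp hk0
    have hkb : (k : G ⧸ N) ∈ Hb.map (QuotientGroup.mk' N) := by rw [hHbK]; exact hka
    obtain ⟨b, hb, hbe⟩ := Subgroup.mem_map.mp hkb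
    have hae : (QuotientGroup.mk a : G ⧸ N) = ↑k := rfl
    have hmem1 : a⁻¹ * h ∈ N := by
      refine QuotientGroup.eq.mp ?_
      exact hae.trans hhe.symm
    have hmem2 : b⁻¹ * h ∈ N := by
      refine QuotientGroup.eq.mp ?_
      exact hbe.trans hhe.symm
    have e1 := hfspec Ha (by exact ⟨hHan, hHao, hHaM, hHaK⟩) k h a hh ha hhe hae hmem1
    have e2 := hfspec Hb (by exact ⟨hHbn, hHbo, hHbM, hHbK⟩) k h b hh hb hhe hbe hmem2
    have hq : (QuotientGroup.mk (⟨a⁻¹ * h, hmem1⟩ : ↥N) : ↥N ⧸ M)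
        = QuotientGroup.mk (⟨b⁻¹ * h, hmem2⟩ : ↥N) := by
      rw [← e1, ← e2, hfab]
    have hw : ((⟨a⁻¹ * h, hmem1⟩ : ↥N))⁻¹ * (⟨b⁻¹ * h, hmem2⟩ : ↥N) ∈ M :=
      QuotientGroup.eq.mp hq
    have hwH : (a⁻¹ * h)⁻¹ * (b⁻¹ * h) ∈ Hb := by
      rw [← hHbM, Subgroup.mem_subgroupOf] at hw
      exact hw
    have hfinal : a = (h * ((a⁻¹ * h)⁻¹ * (b⁻¹ * h)) * h⁻¹) * b := by group
    rw [hfinal]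
    exact Hb.mul_mem (hHbn.conj_mem _ hwH _) hb
  refine Set.Finite.of_finite_image (f := f) (hfin.subset ?_) ?_
  · rintro _ ⟨H, hH, rfl⟩
    exact hfopen H hH
  · intro H₁ hH₁ H₂ hH₂ hf12
    exact le_antisymm (key H₁ hH₁ H₂ hH₂ hf12) (key H₂ hH₂ H₁ hH₁ hf12.symm)

lemma stageB (N : Subgroup G) [N.Normal] (hN : IsClosed (N : Set G))
    (h₁ : SmallTopGroup ↥N) (h₂ : SmallTopGroup (G ⧸ N)) (m : ℕ) :
    {H : Subgroup G | H.Normal ∧ IsOpen (H : Set G) ∧ H.index ≤ m}.Finite := by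
  classical
  haveI : CompactSpace ↥N := isCompact_iff_compactSpace.mp hN.isCompact
  have h𝓜 := smallAux h₁ m
  have h𝓚 := smallAux h₂ m
  refine Set.Finite.subset (Set.Finite.biUnion (h𝓜.prod h𝓚)
    (fun p _ => fiber_finite N hN h₂ p.1 p.2)) ?_
  rintro H ⟨hHn, hHo, hHi⟩
  haveI := hHn
  have hidx : H.index ≠ 0 := indexNeZero hHo
  -- the induced subgroup of N
  have hMo : IsOpen ((H.subgroupOf N : Subgroup ↥N) : Set ↥N) :=
    Subgroup.subgroupOf_isOpen N H hHo
  have hMi0 : (H.subgroupOf N).index ≠ 0 := indexNeZero hMo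
  have hMile : (H.subgroupOf N).index ≤ m := by
    have hdvd : H.relIndex N ∣ H.index := Subgroup.relIndex_dvd_index_of_normal H N
    have : H.relIndex N ≤ H.index := Nat.le_of_dvd (Nat.pos_of_ne_zero hidx) hdvd
    exact le_trans this hHi
  -- the image in the quotient
  have hKo : IsOpen ((H.map (QuotientGroup.mk' N) : Subgroup (G ⧸ N)) : Set (G ⧸ N)) := by
    have hcm : ((H.map (QuotientGroup.mk' N) : Subgroup (G ⧸ N)) : Set (G ⧸ N))
        = QuotientGroup.mk '' (H : Set G) := by rw [Subgroup.coe_map]; rfl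
    rw [hcm]
    exact QuotientGroup.isOpenMap_coe _ hHo
  have hKi0 : (H.map (QuotientGroup.mk' N)).index ≠ 0 := indexNeZero hKo
  have hKile : (H.map (QuotientGroup.mk' N)).index ≤ m := by
    have hdvd := Subgroup.index_map_dvd (H := H) (QuotientGroup.mk'_surjective N)
    exact le_trans (Nat.le_of_dvd (Nat.pos_of_ne_zero hidx) hdvd) hHi
  have hmemprod : (H.subgroupOf N, H.map (QuotientGroup.mk' N)) ∈
      ({M : Subgroup ↥N | IsOpen (M : Set ↥N) ∧ 0 < M.index ∧ M.index ≤ m} ×ˢ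
       {K : Subgroup (G ⧸ N) | IsOpen (K : Set (G ⧸ N)) ∧ 0 < K.index ∧ K.index ≤ m}) :=
    Set.mem_prod.mpr ⟨⟨hMo, Nat.pos_of_ne_zero hMi0, hMile⟩,
      ⟨hKo, Nat.pos_of_ne_zero hKi0, hKile⟩⟩
  exact Set.mem_biUnion hmemprod ⟨hHn, hHo, rfl, rfl⟩

end Fiber


/-- Let `G` be a profinite group (compact, Hausdorff, totally disconnected
topological group) and `N` a closed normal subgroup of `G`. If `N` (with the subspace topology)
and `G ⧸ N` (with the quotient topology) are both small, then `G` is small. -/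
theorem smallTopGroup_of_closed_normal_subgroup
    {G : Type*} [Group G] [TopologicalSpace G] [IsTopologicalGroup G]
    [CompactSpace G] [T2Space G] [TotallyDisconnectedSpace G]
    (N : Subgroup G) [N.Normal] (hN : IsClosed (N : Set G))
    (h₁ : SmallTopGroup ↥N) (h₂ : SmallTopGroup (G ⧸ N)) :
    SmallTopGroup G := by
  intro n hn
  have hB := stageB N hN h₁ h₂ (Nat.factorial n)
  have cover : {H : Subgroup G | IsOpen (H : Set G) ∧ H.index = n} ⊆
      ⋃ Kc ∈ {H : Subgroup G | H.Normal ∧ IsOpen (H : Set G) ∧ H.index ≤ n.factorial},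
        {H : Subgroup G | Kc ≤ H} := by
    rintro H ⟨hHo, hHi⟩
    have hfinq : Finite (G ⧸ H) := Subgroup.quotient_finite_of_isOpen H hHo
    refine Set.mem_biUnion ⟨inferInstance, isOpen_normalCore hHo, ?_⟩ H.normalCore_le
    calc H.normalCore.index ≤ (H.index).factorial := normalCore_index_le hfinq
      _ = n.factorial := by rw [hHi]
  refine Set.Finite.subset (Set.Finite.biUnion hB (fun Kc hKc => ?_)) cover
  haveI := hKc.1
  exact finite_subgroups_above (Subgroup.quotient_finite_of_isOpen Kc hKc.2.1)
end
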